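/- In the general fixed-point-matrix setup, for every λ ∈ (0,2): the fixed-point set of M_λ equals the fixed-point set of M, which equals ker(W_G(I − W_J) + (I − W_G) W_J); and the powers M_λ^k converge, as k → ∞, to M^∞, the orthogonal projection onto Fix M = ker(W_G(I − W_J) + (I − W_G) W_J). -/

import Mathlib

set_option maxHeartbeats 1000000

noncomputable section
open Filter Topology ContinuousLinearMap RealInnerProductSpace

/-- `ℝⁿ` as a Euclidean space. -/
abbrev E (n : ℕ) := EuclideanSpace ℝ (Fin n)

/-- Orthogonal projection onto a subspace `T`, as an endomorphism of `ℝⁿ`. -/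
def projCLM {n : ℕ} (T : Submodule ℝ (E n)) : E n →L[ℝ] E n :=
  T.subtypeL.comp (Submodule.orthogonalProjection T)

/-- A linear map is symmetric positive semidefinite. -/
def IsSymPSD {n : ℕ} (A : E n →L[ℝ] E n) : Prop :=
  (∀ x y : E n, (inner ℝ (A x) y : ℝ) = inner ℝ x (A y)) ∧ ∀ x : E n, (0 : ℝ) ≤ inner ℝ (A x) x

/-- `W = P_T ∘ (I + P_T ∘ H ∘ P_T)⁻¹ ∘ P_T`, the building block of the Douglas–Rachford
fixed-point matrix (`Ring.inverse` is the genuine inverse since `I + P_T H P_T` is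
invertible for symmetric positive semidefinite `H`). -/
def Wop {n : ℕ} (T : Submodule ℝ (E n)) (H : E n →L[ℝ] E n) : E n →L[ℝ] E n :=
  projCLM T * Ring.inverse (1 + projCLM T * H * projCLM T) * projCLM T

/-- The Douglas–Rachford fixed-point matrix `M = I + 2 W_G W_J − W_G − W_J`. -/
def Mop {n : ℕ} (TJ TG : Submodule ℝ (E n)) (HJ HG : E n →L[ℝ] E n) : E n →L[ℝ] E n :=
  1 + (2 : ℝ) • (Wop TG HG * Wop TJ HJ) - Wop TG HG - Wop TJ HJ

/-- The relaxed matrix `M_λ = (1 − λ) I + λ M`. -/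
def Mlam {n : ℕ} (lam : ℝ) (TJ TG : Submodule ℝ (E n)) (HJ HG : E n →L[ℝ] E n) :
    E n →L[ℝ] E n :=
  (1 - lam) • (1 : E n →L[ℝ] E n) + lam • Mop TJ TG HJ HG

/-- The fixed-point set `Fix A = {x | A x = x}` as a submodule, i.e. `ker (A − I)`. -/
def FixM {n : ℕ} (A : E n →L[ℝ] E n) : Submodule ℝ (E n) :=
  LinearMap.ker ((A - 1 : E n →L[ℝ] E n) : E n →ₗ[ℝ] E n)

/-- `M^∞`: the orthogonal projection onto `Fix M`. -/
def Minf {n : ℕ} (TJ TG : Submodule ℝ (E n)) (HJ HG : E n →L[ℝ] E n) : E n →L[ℝ] E n :=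
  projCLM (FixM (Mop TJ TG HJ HG))

/-- The spectral radius of an endomorphism of `ℝⁿ`: the supremum of the moduli of the
complex eigenvalues (eigenvalues of the complexified matrix). -/
def specRad {n : ℕ} (A : E n →L[ℝ] E n) : ℝ :=
  sSup ((fun z : ℂ => ‖z‖) ''
    spectrum ℂ (((LinearMap.toMatrix (EuclideanSpace.basisFun (Fin n) ℝ).toBasis
      (EuclideanSpace.basisFun (Fin n) ℝ).toBasis) A.toLinearMap).map (algebraMap ℝ ℂ)))

/-- The cosine of the Friedrichs angle between two subspaces `U` and `V`. -/
def cF {n : ℕ} (U V : Submodule ℝ (E n)) : ℝ :=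
  sSup {r : ℝ | ∃ u v : E n, u ∈ U ⊓ (U ⊓ V)ᗮ ∧ v ∈ V ⊓ (U ⊓ V)ᗮ ∧
    ‖u‖ ≤ 1 ∧ ‖v‖ ≤ 1 ∧ r = (inner ℝ u v : ℝ)}

lemma projCLM_sa {n : ℕ} (T : Submodule ℝ (E n)) : IsSelfAdjoint (projCLM T) :=
  isSelfAdjoint_starProjection T

lemma php_pos {n : ℕ} (T : Submodule ℝ (E n)) (H : E n →L[ℝ] E n) (hH : H.IsPositive) :
    (projCLM T * H * projCLM T).IsPositive := by
  have h := hH.conj_adjoint (projCLM T)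
  rw [(projCLM_sa T).adjoint_eq] at h
  simpa [← ContinuousLinearMap.mul_def, mul_assoc] using h

lemma symPSD_pos {n : ℕ} {A : E n →L[ℝ] E n} (hA : IsSymPSD A) : A.IsPositive := by
  constructor
  · show LinearMap.IsSymmetric (A : E n →ₗ[ℝ] E n)
    exact fun x y => hA.1 x y
  · intro x
    simpa [ContinuousLinearMap.reApplyInnerSelf] using hA.2 x

lemma pos_inner_nonneg {n : ℕ} {Q : E n →L[ℝ] E n} (hQ : Q.IsPositive) (x : E n) :
    (0:ℝ) ≤ ⟪Q x, x⟫ := by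
  simpa [ContinuousLinearMap.reApplyInnerSelf] using hQ.2 x

lemma isUnit_one_add_pos {n : ℕ} {Q : E n →L[ℝ] E n} (hQ : Q.IsPositive) :
    IsUnit (1 + Q) := by
  set A : E n →L[ℝ] E n := 1 + Q with hA
  have hinj : Function.Injective A := by
    intro x y hxy
    have hz : A (x - y) = 0 := by rw [map_sub, hxy, sub_self]
    have h1 : ⟪A (x-y), x-y⟫ = ‖x - y‖^2 + ⟪Q (x-y), x-y⟫ := by
      simp only [hA, ContinuousLinearMap.add_apply, ContinuousLinearMap.one_apply,
        inner_add_left, real_inner_self_eq_norm_sq]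
    rw [hz, inner_zero_left] at h1
    have h2 := pos_inner_nonneg hQ (x - y)
    have h3 : ‖x - y‖ = 0 := by nlinarith [norm_nonneg (x - y)]
    exact sub_eq_zero.mp (norm_eq_zero.mp h3)
  have hbij : Function.Bijective A :=
    ⟨hinj, LinearMap.surjective_of_injective (f := (A : E n →ₗ[ℝ] E n)) hinj⟩
  let e : E n ≃L[ℝ] E n :=
    (LinearEquiv.ofBijective (A : E n →ₗ[ℝ] E n) hbij).toContinuousLinearEquiv
  refine ⟨⟨A, (e.symm : E n →L[ℝ] E n), ?_, ?_⟩, rfl⟩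
  · refine ContinuousLinearMap.ext fun x => ?_
    exact e.apply_symm_apply x
  · refine ContinuousLinearMap.ext fun x => ?_
    exact e.symm_apply_apply x

section Aux
variable {n : ℕ} (T : Submodule ℝ (E n)) (H : E n →L[ℝ] E n)

lemma inv_props {Q : E n →L[ℝ] E n} (hQ : Q.IsPositive) :
    (Ring.inverse (1 + Q)).IsPositive ∧
      Ring.inverse (1 + Q) * (1 + Q) = 1 ∧ (1 + Q) * Ring.inverse (1 + Q) = 1 := by
  have hu := isUnit_one_add_pos hQ
  set U : E n →L[ℝ] E n := Ring.inverse (1 + Q) with hUdef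
  have hUl : U * (1 + Q) = 1 := Ring.inverse_mul_cancel _ hu
  have hUr : (1 + Q) * U = 1 := Ring.mul_inverse_cancel _ hu
  have hQsa : IsSelfAdjoint (1 + Q) := by
    exact (IsSelfAdjoint.one _).add hQ.isSelfAdjoint
  have hUsa : IsSelfAdjoint U := by
    have h1 : star U * (1 + Q) = 1 := by
      have := congrArg star hUr
      rwa [star_mul, hQsa.star_eq, star_one] at this
    calc star U = star U * ((1 + Q) * U) := by rw [hUr, mul_one]
      _ = (star U * (1 + Q)) * U := by rw [mul_assoc]
      _ = U := by rw [h1, one_mul]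
  refine ⟨⟨ContinuousLinearMap.isSelfAdjoint_iff_isSymmetric.mp hUsa, fun x => ?_⟩, hUl, hUr⟩
  have hx : (1 + Q) (U x) = x := by
    have := congrFun (congrArg DFunLike.coe hUr) x; simpa using this
  have hx2 : U x + Q (U x) = x := by
    simpa [ContinuousLinearMap.add_apply] using hx
  have e1 : ⟪U x, x⟫ = ⟪U x, U x⟫ + ⟪U x, Q (U x)⟫ := by
    calc ⟪U x, x⟫ = ⟪U x, U x + Q (U x)⟫ := by rw [hx2]
      _ = _ := inner_add_right _ _ _
  have h2 : (0:ℝ) ≤ ⟪Q (U x), U x⟫ := pos_inner_nonneg hQ (U x)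
  rw [real_inner_comm (U x) (Q (U x))] at h2
  have key : (0:ℝ) ≤ ⟪U x, x⟫ := by
    nlinarith [real_inner_self_nonneg (x := U x)]
  simpa [ContinuousLinearMap.reApplyInnerSelf] using key

lemma Wop_pos (hH : IsSymPSD H) : (Wop T H).IsPositive := by
  have hQ := php_pos T H (symPSD_pos hH)
  obtain ⟨hU, _, _⟩ := inv_props hQ
  have h := hU.conj_adjoint (projCLM T)
  rw [(projCLM_sa T).adjoint_eq] at h
  simpa [Wop, ← ContinuousLinearMap.mul_def, mul_assoc] using h

lemma projCLM_norm_le (x : E n) : ‖projCLM T x‖ ≤ ‖x‖ := by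
  have h1 : ‖projCLM T x‖ = ‖Submodule.orthogonalProjection T x‖ := rfl
  rw [h1]
  calc ‖Submodule.orthogonalProjection T x‖ ≤ ‖Submodule.orthogonalProjection T‖ * ‖x‖ :=
        (Submodule.orthogonalProjection T).le_opNorm x
    _ ≤ 1 * ‖x‖ := by
        have := Submodule.orthogonalProjection_norm_le T
        exact mul_le_mul_of_nonneg_right this (norm_nonneg x)
    _ = ‖x‖ := one_mul _

lemma sa_inner {A : E n →L[ℝ] E n} (hA : IsSelfAdjoint A) (x y : E n) :
    ⟪A x, y⟫ = ⟪x, A y⟫ :=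
  (ContinuousLinearMap.isSelfAdjoint_iff_isSymmetric.mp hA) x y

lemma one_sub_Wop_pos (hH : IsSymPSD H) : ((1 : E n →L[ℝ] E n) - Wop T H).IsPositive := by
  have hQ := php_pos T H (symPSD_pos hH)
  obtain ⟨hU, hUl, hUr⟩ := inv_props hQ
  set Q : E n →L[ℝ] E n := projCLM T * H * projCLM T
  set U : E n →L[ℝ] E n := Ring.inverse (1 + Q)
  have hWsa : IsSelfAdjoint (Wop T H) := (Wop_pos T H hH).isSelfAdjoint
  constructor
  · exact ContinuousLinearMap.isSelfAdjoint_iff_isSymmetric.mp ((IsSelfAdjoint.one _).sub hWsa)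
  · intro x
    set y : E n := projCLM T x with hy
    have hWx : Wop T H x = projCLM T (U y) := rfl
    have e0 : ⟪Wop T H x, x⟫ = ⟪U y, y⟫ := by
      rw [hWx, sa_inner (projCLM_sa T) (U y) x]
    set z : E n := U y with hz
    have hyz : z + Q z = y := by
      have := congrFun (congrArg DFunLike.coe hUr) y
      simpa [ContinuousLinearMap.add_apply] using this
    have e1 : ⟪U y, y⟫ = ⟪z, z⟫ + ⟪z, Q z⟫ := by
      calc ⟪U y, y⟫ = ⟪z, z + Q z⟫ := by rw [hyz]
        _ = _ := inner_add_right _ _ _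
    have e2 : ‖y‖^2 = ⟪z, z⟫ + 2*⟪z, Q z⟫ + ⟪Q z, Q z⟫ := by
      rw [← real_inner_self_eq_norm_sq, ← hyz]
      rw [inner_add_left, inner_add_right, inner_add_right, real_inner_comm (Q z) z]
      ring
    have h3 : (0:ℝ) ≤ ⟪Q z, z⟫ := pos_inner_nonneg hQ z
    rw [real_inner_comm z (Q z)] at h3
    have h4 : ‖y‖ ≤ ‖x‖ := projCLM_norm_le T x
    have h5 : (0:ℝ) ≤ ⟪Q z, Q z⟫ := real_inner_self_nonneg
    have key : ⟪Wop T H x, x⟫ ≤ ‖x‖^2 := by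
      rw [e0, e1]
      nlinarith [norm_nonneg y, norm_nonneg x]
    have : ContinuousLinearMap.reApplyInnerSelf ((1 : E n →L[ℝ] E n) - Wop T H) x
        = ⟪x, x⟫ - ⟪Wop T H x, x⟫ := by
      simp only [ContinuousLinearMap.reApplyInnerSelf, ContinuousLinearMap.sub_apply,
        ContinuousLinearMap.one_apply, inner_sub_left, RCLike.re_to_real]
    rw [this, real_inner_self_eq_norm_sq]
    linarith

lemma cs_psd {A : E n →L[ℝ] E n} (hA : A.IsPositive) (x y : E n) :
    ⟪A x, y⟫^2 ≤ ⟪A x, x⟫ * ⟪A y, y⟫ := by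
  have key : ∀ t : ℝ, 0 ≤ ⟪A y, y⟫ * (t*t) + (2*⟪A x, y⟫) * t + ⟪A x, x⟫ := by
    intro t
    have h := pos_inner_nonneg hA (x + t • y)
    have hsym : ⟪A y, x⟫ = ⟪A x, y⟫ := by
      rw [sa_inner hA.isSelfAdjoint y x, real_inner_comm]
    simp only [map_add, map_smul, inner_add_left, inner_add_right,
      real_inner_smul_left, real_inner_smul_right] at h
    rw [hsym] at h
    ring_nf at h ⊢
    linarith
  have hd := discrim_le_zero key
  simp only [discrim] at hd
  nlinarith [hd]

lemma norm_sq_le_inner {W : E n →L[ℝ] E n} (hW : W.IsPositive)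
    (h1 : ((1 : E n →L[ℝ] E n) - W).IsPositive) (x : E n) : ‖W x‖^2 ≤ ⟪W x, x⟫ := by
  have c := cs_psd hW x (W x)
  have b : ⟪W (W x), W x⟫ ≤ ⟪W x, W x⟫ := by
    have := pos_inner_nonneg h1 (W x)
    simp only [ContinuousLinearMap.sub_apply, ContinuousLinearMap.one_apply,
      inner_sub_left] at this
    linarith
  have hb0 : (0:ℝ) ≤ ⟪W (W x), W x⟫ := pos_inner_nonneg hW (W x)
  have ha0 : (0:ℝ) ≤ ⟪W x, W x⟫ := real_inner_self_nonneg
  have hc0 : (0:ℝ) ≤ ⟪W x, x⟫ := pos_inner_nonneg hW x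
  rw [← real_inner_self_eq_norm_sq]
  nlinarith [c, b, hb0, ha0, hc0]

lemma norm_one_sub_two_smul {W : E n →L[ℝ] E n} (hW : W.IsPositive)
    (h1 : ((1 : E n →L[ℝ] E n) - W).IsPositive) :
    ‖(1 : E n →L[ℝ] E n) - (2:ℝ) • W‖ ≤ 1 := by
  refine ContinuousLinearMap.opNorm_le_bound _ zero_le_one fun x => ?_
  have happ : ((1 : E n →L[ℝ] E n) - (2:ℝ) • W) x = x - (2:ℝ) • (W x) := by
    simp [ContinuousLinearMap.sub_apply, ContinuousLinearMap.smul_apply]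
  have hsq : ‖((1 : E n →L[ℝ] E n) - (2:ℝ) • W) x‖^2 ≤ ‖x‖^2 := by
    rw [happ, norm_sub_sq_real]
    have h2 : ⟪x, (2:ℝ) • (W x)⟫ = 2 * ⟪W x, x⟫ := by
      rw [real_inner_smul_right, real_inner_comm]
    have h3 : ‖(2:ℝ) • (W x)‖^2 = 4 * ‖W x‖^2 := by
      rw [norm_smul]; simp; ring
    rw [h2, h3]
    nlinarith [norm_sq_le_inner hW h1 x]
  rw [one_mul]
  nlinarith [norm_nonneg (((1 : E n →L[ℝ] E n) - (2:ℝ) • W) x), norm_nonneg x]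

end Aux

lemma Mlam_eq {n : ℕ} (TJ TG : Submodule ℝ (E n)) (HJ HG : E n →L[ℝ] E n) (lam : ℝ) :
    Mlam lam TJ TG HJ HG = (1 - lam/2) • (1 : E n →L[ℝ] E n)
      + (lam/2) • (((1 : E n →L[ℝ] E n) - (2:ℝ) • Wop TG HG)
          * ((1 : E n →L[ℝ] E n) - (2:ℝ) • Wop TJ HJ)) := by
  refine ContinuousLinearMap.ext fun x => ?_
  simp only [Mlam, Mop, ContinuousLinearMap.add_apply, ContinuousLinearMap.sub_apply,
    ContinuousLinearMap.smul_apply, ContinuousLinearMap.one_apply,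
    ContinuousLinearMap.mul_apply, map_sub, map_smul]
  module

-- Mop x = x ↔ A x = 0

lemma Mop_fix_iff {n : ℕ} (TJ TG : Submodule ℝ (E n)) (HJ HG : E n →L[ℝ] E n) (x : E n) :
    Mop TJ TG HJ HG x = x ↔
      (Wop TG HG * (1 - Wop TJ HJ) + (1 - Wop TG HG) * Wop TJ HJ) x = 0 := by
  have key : (Wop TG HG * (1 - Wop TJ HJ) + (1 - Wop TG HG) * Wop TJ HJ) x
      = x - Mop TJ TG HJ HG x := by
    simp only [Mop, ContinuousLinearMap.add_apply, ContinuousLinearMap.sub_apply,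
      ContinuousLinearMap.smul_apply, ContinuousLinearMap.one_apply,
      ContinuousLinearMap.mul_apply, map_sub, map_smul]
    module
  rw [key, sub_eq_zero, eq_comm]

theorem powers_tendsto_proj {n : ℕ} (N : E n →L[ℝ] E n) (hN : ‖N‖ ≤ 1)
    {α : ℝ} (hα0 : 0 < α) (hα1 : α < 1) :
    Tendsto (fun k : ℕ => ((1 - α) • (1 : E n →L[ℝ] E n) + α • N) ^ k) atTop
      (𝓝 (projCLM (LinearMap.ker ((((1 - α) • (1 : E n →L[ℝ] E n) + α • N) - 1 : E n →L[ℝ] E n) : E n →ₗ[ℝ] E n)))) := by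
  set T : E n →L[ℝ] E n := (1 - α) • 1 + α • N with hT
  have hTapp : ∀ x, T x = (1 - α) • x + α • N x := fun x => by
    simp [hT, ContinuousLinearMap.add_apply, ContinuousLinearMap.smul_apply]
  have hfix : ∀ x : E n, T x = x ↔ N x = x := by
    intro x
    rw [hTapp]
    constructor
    · intro h
      have h3 : α • N x = x - (1 - α) • x := eq_sub_of_add_eq' h
      have h2 : α • N x = α • x := by rw [h3]; module
      exact smul_right_injective (E n) (ne_of_gt hα0) h2
    · intro h; rw [h]; module
  set F : Submodule ℝ (E n) := LinearMap.ker ((T - 1 : E n →L[ℝ] E n) : E n →ₗ[ℝ] E n) with hF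
  have hmemF : ∀ x, x ∈ F ↔ T x = x := by
    intro x
    rw [hF, LinearMap.mem_ker]
    constructor
    · intro h
      have : T x - x = 0 := by
        simpa [ContinuousLinearMap.sub_apply] using h
      exact sub_eq_zero.mp this
    · intro h
      simp [ContinuousLinearMap.sub_apply, h]
  -- adjoint fixes F
  have hNad : ∀ x, N x = x → ContinuousLinearMap.adjoint N x = x := by
    intro x hx
    set A := ContinuousLinearMap.adjoint N with hA
    have hnormA : ‖A‖ = ‖N‖ := by
      rw [hA]; exact (ContinuousLinearMap.adjoint : (E n →L[ℝ] E n) ≃ₗᵢ⋆[ℝ] _).norm_map N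
    have hnx : ‖A x‖ ≤ ‖x‖ := by
      calc ‖A x‖ ≤ ‖A‖ * ‖x‖ := A.le_opNorm x
        _ ≤ 1 * ‖x‖ := mul_le_mul_of_nonneg_right (by rw [hnormA]; exact hN) (norm_nonneg x)
        _ = ‖x‖ := one_mul _
    have h1 : ⟪A x, x⟫ = ‖x‖^2 := by
      rw [hA, ContinuousLinearMap.adjoint_inner_left, hx, real_inner_self_eq_norm_sq]
    have h2 : ‖A x - x‖^2 = ‖A x‖^2 - 2*⟪A x, x⟫ + ‖x‖^2 := norm_sub_sq_real _ _
    have h3 : ‖A x - x‖^2 ≤ 0 := by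
      rw [h2, h1]; nlinarith [norm_nonneg (A x), norm_nonneg x]
    have h4 : ‖A x - x‖ = 0 := by nlinarith [norm_nonneg (A x - x)]
    exact sub_eq_zero.mp (norm_eq_zero.mp h4)
  -- Fᗮ invariant
  have hNF : ∀ v ∈ Fᗮ, N v ∈ Fᗮ := by
    intro v hv
    rw [Submodule.mem_orthogonal] at hv ⊢
    intro u hu
    have hu' : N u = u := (hfix u).mp ((hmemF u).mp hu)
    calc ⟪u, N v⟫ = ⟪ContinuousLinearMap.adjoint N u, v⟫ := by
          rw [ContinuousLinearMap.adjoint_inner_left]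
      _ = ⟪u, v⟫ := by rw [hNad u hu']
      _ = 0 := hv u hu
  have hTF : ∀ v ∈ Fᗮ, T v ∈ Fᗮ := by
    intro v hv
    rw [hTapp]
    exact Submodule.add_mem _ (Submodule.smul_mem _ _ hv) (Submodule.smul_mem _ _ (hNF v hv))
  -- one step contraction estimate
  have hcontr2 : ∀ x, ‖T x‖^2 ≤ ‖x‖^2 - α*(1-α)*‖x - N x‖^2 := by
    intro x
    have hNx : ‖N x‖ ≤ ‖x‖ := by
      calc ‖N x‖ ≤ ‖N‖ * ‖x‖ := N.le_opNorm x
        _ ≤ 1 * ‖x‖ := mul_le_mul_of_nonneg_right hN (norm_nonneg x)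
        _ = ‖x‖ := one_mul _
    have ha1 : |1 - α| = 1 - α := abs_of_pos (by linarith)
    have ha2 : |α| = α := abs_of_pos hα0
    have e1 : ‖T x‖^2 = (1-α)^2*‖x‖^2 + 2*((1-α)*α)*⟪x, N x⟫ + α^2*‖N x‖^2 := by
      rw [hTapp x, norm_add_sq_real, norm_smul, norm_smul, real_inner_smul_left,
        real_inner_smul_right, Real.norm_eq_abs, Real.norm_eq_abs, ha1, ha2]
      ring
    have e2 : ‖x - N x‖^2 = ‖x‖^2 - 2*⟪x, N x⟫ + ‖N x‖^2 := norm_sub_sq_real _ _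
    have key : ‖x‖^2 - α*(1-α)*‖x - N x‖^2 - ‖T x‖^2 = α*(‖x‖^2 - ‖N x‖^2) := by
      rw [e1, e2]; ring
    have hba : ‖N x‖^2 ≤ ‖x‖^2 := by nlinarith [norm_nonneg (N x), norm_nonneg x]
    nlinarith [mul_nonneg (le_of_lt hα0) (sub_nonneg.mpr hba), key]
  -- compactness: maximum of ‖T v‖ on the unit ball of Fᗮ
  set K : Set (E n) := Metric.closedBall 0 1 ∩ (Fᗮ : Set (E n)) with hK
  have hKc : IsCompact K :=
    (isCompact_closedBall (0 : E n) 1).inter_right (Submodule.closed_of_finiteDimensional Fᗮ)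
  have hK0 : (0 : E n) ∈ K := ⟨Metric.mem_closedBall.mpr (by simp), Submodule.zero_mem _⟩
  obtain ⟨v₀, hv₀K, hmax⟩ :=
    hKc.exists_isMaxOn ⟨0, hK0⟩ (T.continuous.norm.continuousOn)
  set ρ : ℝ := ‖T v₀‖ with hρ
  have hρ0 : 0 ≤ ρ := norm_nonneg _
  have hρ1 : ρ < 1 := by
    rcases eq_or_ne v₀ 0 with h0 | h0
    · rw [hρ, h0, map_zero, norm_zero]; norm_num
    · have hvF : v₀ ∈ Fᗮ := hv₀K.2
      have hvn : ‖v₀‖ ≤ 1 := by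
        have := hv₀K.1
        rwa [Metric.mem_closedBall, dist_zero_right] at this
      have hNv : N v₀ ≠ v₀ := by
        intro h
        have hmem : v₀ ∈ F := (hmemF v₀).mpr ((hfix v₀).mpr h)
        exact h0 (Submodule.disjoint_def.mp (Submodule.orthogonal_disjoint F) v₀ hmem hvF)
      have hsub : 0 < ‖v₀ - N v₀‖ := by
        rw [norm_pos_iff, sub_ne_zero]; exact Ne.symm hNv
      have h2 := hcontr2 v₀
      have hsq : ρ^2 < 1 := by
        nlinarith [mul_pos (mul_pos hα0 (by linarith : (0:ℝ) < 1 - α)) (pow_pos hsub 2),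
          norm_nonneg v₀]
      nlinarith [hρ0]
  have hcontr : ∀ v ∈ Fᗮ, ‖T v‖ ≤ ρ * ‖v‖ := by
    intro v hv
    rcases eq_or_ne v 0 with rfl | hv0
    · simp
    · have hnv : 0 < ‖v‖ := norm_pos_iff.mpr hv0
      have huK : (‖v‖⁻¹ • v) ∈ K := by
        constructor
        · rw [Metric.mem_closedBall, dist_zero_right, norm_smul, Real.norm_eq_abs,
            abs_of_pos (inv_pos.mpr hnv), inv_mul_cancel₀ (ne_of_gt hnv)]
        · exact Submodule.smul_mem _ _ hv
      have hle : ‖T (‖v‖⁻¹ • v)‖ ≤ ρ := hmax huK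
      rw [map_smul, norm_smul, Real.norm_eq_abs, abs_of_pos (inv_pos.mpr hnv)] at hle
      calc ‖T v‖ = ‖v‖ * (‖v‖⁻¹ * ‖T v‖) := by
            rw [← mul_assoc, mul_inv_cancel₀ (ne_of_gt hnv), one_mul]
        _ ≤ ‖v‖ * ρ := mul_le_mul_of_nonneg_left hle (le_of_lt hnv)
        _ = ρ * ‖v‖ := mul_comm _ _
  -- iterates
  have hiter : ∀ (k : ℕ) (v : E n), v ∈ Fᗮ → (T ^ k) v ∈ Fᗮ ∧ ‖(T ^ k) v‖ ≤ ρ^k * ‖v‖ := by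
    intro k
    induction k with
    | zero => intro v hv; simp [hv]
    | succ k ih =>
      intro v hv
      have h1 : (T ^ (k+1)) v = (T ^ k) (T v) := by
        rw [pow_succ, ContinuousLinearMap.mul_apply]
      obtain ⟨hm, hb⟩ := ih (T v) (hTF v hv)
      refine ⟨by rw [h1]; exact hm, ?_⟩
      rw [h1]
      calc ‖(T ^ k) (T v)‖ ≤ ρ^k * ‖T v‖ := hb
        _ ≤ ρ^k * (ρ * ‖v‖) := mul_le_mul_of_nonneg_left (hcontr v hv) (pow_nonneg hρ0 k)
        _ = ρ^(k+1) * ‖v‖ := by ring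
  have hfixiter : ∀ (k : ℕ) (x : E n), x ∈ F → (T ^ k) x = x := by
    intro k
    induction k with
    | zero => intro x _; simp
    | succ k ih =>
      intro x hx
      rw [pow_succ, ContinuousLinearMap.mul_apply, (hmemF x).mp hx, ih x hx]
  -- the projection
  set P : E n →L[ℝ] E n := projCLM F with hP
  have hPmem : ∀ x, P x ∈ F := fun x => Submodule.coe_mem (Submodule.orthogonalProjection F x)
  have hPorth : ∀ x, x - P x ∈ Fᗮ := fun x => Submodule.sub_starProjection_mem_orthogonal x
  have hbound : ∀ (k : ℕ) (x : E n), ‖(T ^ k) x - P x‖ ≤ ρ^k * (2 * ‖x‖) := by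
    intro k x
    have hsplit : (T ^ k) x - P x = (T ^ k) (x - P x) := by
      rw [map_sub, hfixiter k (P x) (hPmem x)]
    rw [hsplit]
    have h1 := (hiter k (x - P x) (hPorth x)).2
    have h2 : ‖x - P x‖ ≤ 2 * ‖x‖ := by
      calc ‖x - P x‖ ≤ ‖x‖ + ‖P x‖ := norm_sub_le _ _
        _ ≤ ‖x‖ + ‖x‖ := by linarith [projCLM_norm_le F x]
        _ = 2 * ‖x‖ := by ring
    calc ‖(T ^ k) (x - P x)‖ ≤ ρ^k * ‖x - P x‖ := h1
      _ ≤ ρ^k * (2 * ‖x‖) := mul_le_mul_of_nonneg_left h2 (pow_nonneg hρ0 k)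
  have hop : ∀ k : ℕ, ‖T ^ k - P‖ ≤ 2 * ρ^k := by
    intro k
    refine ContinuousLinearMap.opNorm_le_bound _ (by positivity) fun x => ?_
    rw [ContinuousLinearMap.sub_apply]
    calc ‖(T ^ k) x - P x‖ ≤ ρ^k * (2 * ‖x‖) := hbound k x
      _ = 2 * ρ^k * ‖x‖ := by ring
  rw [tendsto_iff_norm_sub_tendsto_zero]
  have hlim : Tendsto (fun k : ℕ => 2 * ρ^k) atTop (𝓝 0) := by
    have := (tendsto_pow_atTop_nhds_zero_of_lt_one hρ0 hρ1).const_mul 2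
    simpa using this
  exact squeeze_zero (fun k => norm_nonneg _) hop hlim

lemma Mlam_fix_iff {n : ℕ} (TJ TG : Submodule ℝ (E n)) (HJ HG : E n →L[ℝ] E n)
    {lam : ℝ} (hlam0 : lam ≠ 0) (x : E n) :
    Mlam lam TJ TG HJ HG x = x ↔ Mop TJ TG HJ HG x = x := by
  have happ : Mlam lam TJ TG HJ HG x = (1 - lam) • x + lam • (Mop TJ TG HJ HG x) := by
    simp [Mlam, ContinuousLinearMap.add_apply, ContinuousLinearMap.smul_apply]
  rw [happ]
  constructor
  · intro h
    have h3 : lam • Mop TJ TG HJ HG x = x - (1 - lam) • x := eq_sub_of_add_eq' h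
    have h2 : lam • Mop TJ TG HJ HG x = lam • x := by rw [h3]; module
    exact smul_right_injective (E n) hlam0 h2
  · intro h; rw [h]; module

/-- For every `λ ∈ (0,2)`: `Fix M_λ = Fix M = ker(W_G(I − W_J) + (I − W_G)W_J)`,
and `M_λ^k → M^∞`, the orthogonal projection onto `Fix M`. -/
theorem statement8 {n : ℕ} (TJ TG : Submodule ℝ (E n)) (HJ HG : E n →L[ℝ] E n)
    (hHJ : IsSymPSD HJ) (hHG : IsSymPSD HG)
    (lam : ℝ) (hlam : lam ∈ Set.Ioo (0 : ℝ) 2) :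
    {x : E n | Mlam lam TJ TG HJ HG x = x} = {x : E n | Mop TJ TG HJ HG x = x} ∧
    {x : E n | Mop TJ TG HJ HG x = x}
      = {x : E n | (Wop TG HG * (1 - Wop TJ HJ) + (1 - Wop TG HG) * Wop TJ HJ) x = 0} ∧
    FixM (Mop TJ TG HJ HG)
      = LinearMap.ker ((Wop TG HG * (1 - Wop TJ HJ) + (1 - Wop TG HG) * Wop TJ HJ : E n →L[ℝ] E n) :
        E n →ₗ[ℝ] E n) ∧
    Tendsto (fun k : ℕ => Mlam lam TJ TG HJ HG ^ k) atTop (𝓝 (Minf TJ TG HJ HG)) := by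
  obtain ⟨hl0, hl2⟩ := hlam
  have hlam0 : lam ≠ 0 := ne_of_gt hl0
  refine ⟨?_, ?_, ?_, ?_⟩
  · ext x
    exact Mlam_fix_iff TJ TG HJ HG hlam0 x
  · ext x
    exact Mop_fix_iff TJ TG HJ HG x
  · ext x
    rw [FixM, LinearMap.mem_ker, LinearMap.mem_ker]
    constructor
    · intro h
      have hx : Mop TJ TG HJ HG x = x := by
        have : Mop TJ TG HJ HG x - x = 0 := by
          simpa [ContinuousLinearMap.sub_apply] using h
        exact sub_eq_zero.mp this
      exact (Mop_fix_iff TJ TG HJ HG x).mp hx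
    · intro h
      have hx : Mop TJ TG HJ HG x = x := (Mop_fix_iff TJ TG HJ HG x).mpr h
      simp [ContinuousLinearMap.sub_apply, hx]
  · set N : E n →L[ℝ] E n :=
      ((1 : E n →L[ℝ] E n) - (2:ℝ) • Wop TG HG) * ((1 : E n →L[ℝ] E n) - (2:ℝ) • Wop TJ HJ)
      with hNdef
    have hnG : ‖(1 : E n →L[ℝ] E n) - (2:ℝ) • Wop TG HG‖ ≤ 1 :=
      norm_one_sub_two_smul (Wop_pos TG HG hHG) (one_sub_Wop_pos TG HG hHG)
    have hnJ : ‖(1 : E n →L[ℝ] E n) - (2:ℝ) • Wop TJ HJ‖ ≤ 1 :=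
      norm_one_sub_two_smul (Wop_pos TJ HJ hHJ) (one_sub_Wop_pos TJ HJ hHJ)
    have hN : ‖N‖ ≤ 1 := by
      calc ‖N‖ ≤ ‖(1 : E n →L[ℝ] E n) - (2:ℝ) • Wop TG HG‖
            * ‖(1 : E n →L[ℝ] E n) - (2:ℝ) • Wop TJ HJ‖ := norm_mul_le _ _
        _ ≤ 1 * 1 := mul_le_mul hnG hnJ (norm_nonneg _) zero_le_one
        _ = 1 := by norm_num
    have hα0 : 0 < lam/2 := by linarith
    have hα1 : lam/2 < 1 := by linarith
    have h := powers_tendsto_proj N hN hα0 hα1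
    have hMeq : Mlam lam TJ TG HJ HG = (1 - lam/2) • (1 : E n →L[ℝ] E n) + (lam/2) • N :=
      Mlam_eq TJ TG HJ HG lam
    have hker : LinearMap.ker (((Mlam lam TJ TG HJ HG) - 1 : E n →L[ℝ] E n) : E n →ₗ[ℝ] E n) = FixM (Mop TJ TG HJ HG) := by
      ext x
      rw [FixM, LinearMap.mem_ker, LinearMap.mem_ker]
      simp only [ContinuousLinearMap.coe_coe, ContinuousLinearMap.sub_apply, ContinuousLinearMap.one_apply, sub_eq_zero]
      exact Mlam_fix_iff TJ TG HJ HG hlam0 x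
    rw [show Minf TJ TG HJ HG = projCLM (FixM (Mop TJ TG HJ HG)) from rfl, ← hker, hMeq]
    exact h
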